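/- Structured mapping (sufficiency): Let H be unitary with H⋆ = ε₁H, X ∈ 𝕂^{n×p} full column rank, B ∈ 𝕂^{n×p} with X⋆HB = ε₁ε₂(X⋆HB)⋆. Then the matrix A₀ = BX⁺ + ε₁ε₂ H^{-1}[(HBX⁺)⋆ − (X⁺)⋆(X⋆HB)⋆X⁺] satisfies A₀X = B and HA₀ = ε₁ε₂(HA₀)⋆. -/
import Mathlib


open Matrix

/-- `Xp` satisfies the four Moore–Penrose axioms for `X`. -/
def IsMoorePenroseInv {K : Type*} [Field K] [StarRing K] {n p : ℕ}
    (X : Matrix (Fin n) (Fin p) K) (Xp : Matrix (Fin p) (Fin n) K) : Prop :=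
  X * Xp * X = X ∧ Xp * X * Xp = Xp ∧ (X * Xp)ᴴ = X * Xp ∧ (Xp * X)ᴴ = Xp * X

private lemma aux_mulVec_inj {K : Type*} [Field K] {n p : ℕ} (X : Matrix (Fin n) (Fin p) K)
    (hrank : X.rank = p) : Function.Injective X.mulVec := by
  have h := LinearMap.finrank_range_add_finrank_ker X.mulVecLin
  rw [Matrix.rank] at hrank
  rw [hrank] at h
  simp [Module.finrank_fintype_fun_eq_card] at h
  exact LinearMap.ker_eq_bot.mp h

private lemma aux_cancel {K : Type*} [Field K] {n p q : ℕ} {X : Matrix (Fin n) (Fin p) K}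
    (hrank : X.rank = p) {A B : Matrix (Fin p) (Fin q) K} (h : X * A = X * B) : A = B := by
  have hinj := aux_mulVec_inj X hrank
  ext i j
  have : X.mulVec (fun k => A k j) = X.mulVec (fun k => B k j) := by
    funext i'
    simpa [Matrix.mulVec, Matrix.mul_apply, dotProduct] using congrFun (congrFun h i') j
  exact congrFun (hinj this) i

/-- Structured mapping theorem, sufficiency: if `XᴴHB` has the symmetry
`XᴴHB = ε₁ε₂(XᴴHB)ᴴ`, then `A₀ = BX⁺ + ε₁ε₂ H⁻¹[(HBX⁺)ᴴ − (X⁺)ᴴ(XᴴHB)ᴴX⁺]`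
satisfies `A₀ X = B` and is structured: `H A₀ = ε₁ε₂ (H A₀)ᴴ`. -/
theorem stmt13 {K : Type*} [Field K] [StarRing K] {n p : ℕ}
    (H : Matrix (Fin n) (Fin n) K)
    (e1 e2 : K) (he1 : e1 = 1 ∨ e1 = -1) (he2 : e2 = 1 ∨ e2 = -1)
    (hHunit : Hᴴ * H = 1) (hHsym : Hᴴ = e1 • H)
    (X B : Matrix (Fin n) (Fin p) K) (hrank : X.rank = p)
    (Xp : Matrix (Fin p) (Fin n) K) (hXp : IsMoorePenroseInv X Xp)
    (hB : Xᴴ * H * B = (e1 * e2) • (Xᴴ * H * B)ᴴ) :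
    (B * Xp + (e1 * e2) • (H⁻¹ * ((H * B * Xp)ᴴ - Xpᴴ * (Xᴴ * H * B)ᴴ * Xp))) * X = B ∧
    H * (B * Xp + (e1 * e2) • (H⁻¹ * ((H * B * Xp)ᴴ - Xpᴴ * (Xᴴ * H * B)ᴴ * Xp)))
      = (e1 * e2) •
        (H * (B * Xp + (e1 * e2) • (H⁻¹ * ((H * B * Xp)ᴴ - Xpᴴ * (Xᴴ * H * B)ᴴ * Xp))))ᴴ := by
  obtain ⟨h1, h2, h3, h4⟩ := hXp
  have hXpX : Xp * X = 1 := by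
    apply aux_cancel hrank
    rw [← Matrix.mul_assoc, h1, Matrix.mul_one]
  have hE2 : (e1 * e2) * (e1 * e2) = 1 := by
    rcases he1 with h | h <;> rcases he2 with h' | h' <;> subst h <;> subst h' <;> ring
  have hEstar : star (e1 * e2) = e1 * e2 := by
    rcases he1 with h | h <;> rcases he2 with h' | h' <;> subst h <;> subst h' <;> simp
  have hHinv : H⁻¹ = Hᴴ := Matrix.inv_eq_left_inv hHunit
  have hHH : H * H⁻¹ = 1 := by rw [hHinv]; exact mul_eq_one_comm.mp hHunit
  constructor
  · have hbr : ((H * B * Xp)ᴴ - Xpᴴ * (Xᴴ * H * B)ᴴ * Xp) * X = 0 := by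
      simp [Matrix.sub_mul, conjTranspose_mul, Matrix.mul_assoc, hXpX]
    rw [Matrix.add_mul, Matrix.smul_mul, Matrix.mul_assoc B Xp X, hXpX, Matrix.mul_one,
      Matrix.mul_assoc, hbr, Matrix.mul_zero, smul_zero, add_zero]
  · have hD : H * ((e1 * e2) • (H⁻¹ * ((H * B * Xp)ᴴ - Xpᴴ * (Xᴴ * H * B)ᴴ * Xp)))
        = (e1 * e2) • ((H * B * Xp)ᴴ - Xpᴴ * (Xᴴ * H * B)ᴴ * Xp) := by
      rw [Matrix.mul_smul, ← Matrix.mul_assoc, hHH, Matrix.one_mul]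
    rw [Matrix.mul_add, hD]
    have hSH : (Xpᴴ * (Xᴴ * H * B)ᴴ * Xp)ᴴ = Xpᴴ * (Xᴴ * H * B) * Xp := by
      simp [conjTranspose_mul, Matrix.mul_assoc]
    have hkey : Xpᴴ * (Xᴴ * H * B) * Xp = (e1 * e2) • (Xpᴴ * (Xᴴ * H * B)ᴴ * Xp) := by
      nth_rewrite 1 [hB]
      rw [Matrix.mul_smul, Matrix.smul_mul]
    rw [conjTranspose_add, conjTranspose_smul, conjTranspose_sub, conjTranspose_conjTranspose,
      hSH, hEstar, hkey, smul_add, smul_smul, hE2, one_smul, smul_sub,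
      ← Matrix.mul_assoc H B Xp]
    abel
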